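/- arXiv:1411.1334 — 2 statements merged into one kernel-verified Lean document; each statement's English description precedes it below -/
import Mathlib

section
/- For all m ≥ 0 and n ≥ 0, ω(a_{m,n}) = ω(d_m); that is, all entries in the same row of the array have the same number of distinct prime factors. -/
/-- `Z a b = a*b / gcd(a,b)^2`. -/
def Zfun (a b : ℕ) : ℕ := a * b / Nat.gcd a b ^ 2

/-- The array: `ent 0 n` is the `n`-th prime (0-indexed), and
`ent (m+1) n = Z (ent m n) (ent m (n + 1))`. -/
noncomputable def ent : ℕ → ℕ → ℕ
  | 0, n => Nat.nth Nat.Prime n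
  | m + 1, n => Zfun (ent m n) (ent m (n + 1))

/-- The left edge `d_m`. -/
noncomputable def dseq (m : ℕ) : ℕ := ent m 0

lemma coprime_prods {f : ℕ → ℕ} (hf : Function.Injective f)
    (hp : ∀ i, (f i).Prime) {A B : Finset ℕ} (h : Disjoint A B) :
    Nat.Coprime (∏ i ∈ A, f i) (∏ i ∈ B, f i) := by
  apply Nat.Coprime.prod_left
  intro i hi
  apply Nat.Coprime.prod_right
  intro j hj
  have hij : i ≠ j := fun e => (Finset.disjoint_left.mp h hi (e ▸ hj))
  exact (Nat.coprime_primes (hp i) (hp j)).mpr (fun e => hij (hf e))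

lemma Z_prod {f : ℕ → ℕ} (hf : Function.Injective f) (hp : ∀ i, (f i).Prime)
    (A B : Finset ℕ) :
    Zfun (∏ i ∈ A, f i) (∏ i ∈ B, f i) = ∏ i ∈ (A \ B) ∪ (B \ A), f i := by
  have hApos : ∀ (S : Finset ℕ), 0 < ∏ i ∈ S, f i := fun S =>
    Finset.prod_pos (fun i _ => (hp i).pos)
  have hA : A = (A ∩ B) ∪ (A \ B) := by
    rw [Finset.union_comm, Finset.sdiff_union_inter]
  have hB : B = (A ∩ B) ∪ (B \ A) := by
    rw [Finset.union_comm, Finset.inter_comm, Finset.sdiff_union_inter]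
  set g := ∏ i ∈ A ∩ B, f i with hg
  set a' := ∏ i ∈ A \ B, f i with ha'
  set b' := ∏ i ∈ B \ A, f i with hb'
  have hprodA : ∏ i ∈ A, f i = g * a' := by
    rw [hA]; exact Finset.prod_union (Finset.disjoint_left.mpr
      (fun i hi hj => (Finset.mem_sdiff.mp hj).2 (Finset.mem_inter.mp hi).2))
  have hprodB : ∏ i ∈ B, f i = g * b' := by
    rw [hB]; exact Finset.prod_union (Finset.disjoint_left.mpr
      (fun i hi hj => (Finset.mem_sdiff.mp hj).2 (Finset.mem_inter.mp hi).1))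
  have hcop : Nat.Coprime a' b' :=
    coprime_prods hf hp (Finset.disjoint_left.mpr
      (fun i hi hj => (Finset.mem_sdiff.mp hi).2 (Finset.mem_sdiff.mp hj).1))
  have hgcd : Nat.gcd (∏ i ∈ A, f i) (∏ i ∈ B, f i) = g := by
    rw [hprodA, hprodB, Nat.gcd_mul_left, hcop, mul_one]
  have hdisj : Disjoint (A \ B) (B \ A) := Finset.disjoint_left.mpr
      (fun i hi hj => (Finset.mem_sdiff.mp hi).2 (Finset.mem_sdiff.mp hj).1)
  rw [Zfun, hgcd, hprodA, hprodB, Finset.prod_union hdisj, ← ha', ← hb']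
  have : g * a' * (g * b') = g ^ 2 * (a' * b') := by ring
  rw [this, Nat.mul_div_cancel_left _ (pow_pos (hApos _) 2)]

lemma nthp_inj : Function.Injective (Nat.nth Nat.Prime) :=
  Nat.nth_injective Nat.infinite_setOf_prime

lemma ent_eq_prod (m : ℕ) : ∃ S : Finset ℕ,
    ∀ n, ent m n = ∏ i ∈ S, Nat.nth Nat.Prime (n + i) := by
  induction m with
  | zero =>
    exact ⟨{0}, fun n => by simp [ent]⟩
  | succ m ih =>
    obtain ⟨S, hS⟩ := ih
    refine ⟨(S \ S.image (· + 1)) ∪ (S.image (· + 1) \ S), fun n => ?_⟩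
    have hf : Function.Injective (fun i => Nat.nth Nat.Prime (n + i)) :=
      fun i j h => by simpa using nthp_inj h
    have hp : ∀ i, (Nat.nth Nat.Prime (n + i)).Prime := fun i =>
      Nat.prime_nth_prime _
    have h2 : ent m (n + 1) = ∏ i ∈ S.image (· + 1), Nat.nth Nat.Prime (n + i) := by
      rw [Finset.prod_image (fun i _ j _ h => by omega), hS]
      apply Finset.prod_congr rfl
      intro i _
      congr 1
      omega
    show Zfun (ent m n) (ent m (n + 1)) = _
    rw [hS, h2, Z_prod hf hp]

theorem omega_row_constant (m n : ℕ) :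
    (ent m n).primeFactors.card = (dseq m).primeFactors.card := by
  obtain ⟨S, hS⟩ := ent_eq_prod m
  have key : ∀ n, (ent m n).primeFactors.card = S.card := by
    intro n
    have hinj : Set.InjOn (fun i => Nat.nth Nat.Prime (n + i)) S :=
      fun i _ j _ h => by simpa using nthp_inj h
    have hpr : ∏ i ∈ S, Nat.nth Nat.Prime (n + i)
        = ∏ p ∈ S.image (fun i => Nat.nth Nat.Prime (n + i)), p := by
      rw [Finset.prod_image hinj]
    rw [hS n, hpr, Nat.primeFactors_prod (fun p hp => ?_),
      Finset.card_image_of_injOn hinj]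
    simp only [Finset.mem_image] at hp
    obtain ⟨i, _, rfl⟩ := hp
    exact Nat.prime_nth_prime _
  rw [key n, dseq, key 0]
end

section
/- For every s ≥ 1 and every j with 0 ≤ j ≤ 2^s − 1, ω(d_{2^s + j}) = 2·ω(d_j); equivalently, δ_{2^s + j} = δ_j + 1 where δ_m = log_2(ω(d_m)). -/
open Finset
open scoped symmDiff

/-- Positions `n + k` with `C(m,k)` odd. -/
def Tset (m n : ℕ) : Finset ℕ :=
  ((Finset.range (m + 1)).filter (fun k => Nat.choose m k % 2 = 1)).image (fun k => n + k)

lemma mem_Tset {m n t : ℕ} :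
    t ∈ Tset m n ↔ n ≤ t ∧ Nat.choose m (t - n) % 2 = 1 := by
  simp only [Tset, mem_image, mem_filter, mem_range]
  constructor
  · rintro ⟨k, ⟨hk, hodd⟩, rfl⟩
    simpa using hodd
  · rintro ⟨hle, hodd⟩
    refine ⟨t - n, ⟨?_, hodd⟩, by omega⟩
    by_contra h
    rw [Nat.choose_eq_zero_of_lt (by omega)] at hodd
    simp at hodd

lemma Tset_succ (m n : ℕ) : Tset (m + 1) n = Tset m n ∆ Tset m (n + 1) := by
  ext t
  rw [Finset.mem_symmDiff, mem_Tset, mem_Tset, mem_Tset]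
  rcases Nat.lt_trichotomy t n with h | rfl | h
  · constructor
    · rintro ⟨h1, -⟩; omega
    · rintro (⟨⟨h1, -⟩, -⟩ | ⟨⟨h1, -⟩, -⟩) <;> omega
  · constructor
    · intro _
      left
      constructor
      · simp
      · rintro ⟨h, -⟩; omega
    · intro _
      simp
  · have ht : t - n = (t - n - 1) + 1 := by omega
    have ht2 : t - (n + 1) = t - n - 1 := by omega
    rw [ht, Nat.choose_succ_succ, ht2]
    have h1 : n ≤ t := le_of_lt h
    have h2 : n + 1 ≤ t := h
    simp only [h1, h2, true_and, Nat.succ_eq_add_one]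
    omega

lemma Zfun_spec {a b : ℕ} (ha : Squarefree a) (hb : Squarefree b) :
    Squarefree (Zfun a b) ∧
      (Zfun a b).primeFactors = a.primeFactors ∆ b.primeFactors := by
  have ha0 : a ≠ 0 := ha.ne_zero
  have hb0 : b ≠ 0 := hb.ne_zero
  set g := Nat.gcd a b with hg
  have hgpos : 0 < g := Nat.gcd_pos_of_pos_left _ (Nat.pos_of_ne_zero ha0)
  have hga : g ∣ a := Nat.gcd_dvd_left a b
  have hgb : g ∣ b := Nat.gcd_dvd_right a b
  have hZ : Zfun a b = (a / g) * (b / g) := by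
    rw [Zfun, pow_two, ← Nat.div_mul_div_comm hga hgb]
  have hag : g * (a / g) = a := Nat.mul_div_cancel' hga
  have hbg : g * (b / g) = b := Nat.mul_div_cancel' hgb
  have hsa : Squarefree (g * (a / g)) := by rw [hag]; exact ha
  have hsb : Squarefree (g * (b / g)) := by rw [hbg]; exact hb
  rw [Nat.squarefree_mul_iff] at hsa hsb
  have hcop : Nat.Coprime (a / g) (b / g) := Nat.coprime_div_gcd_div_gcd hgpos
  have hZsq : Squarefree (Zfun a b) := by
    rw [hZ, Nat.squarefree_mul_iff]
    exact ⟨hcop, hsa.2.2, hsb.2.2⟩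
  refine ⟨hZsq, ?_⟩
  have hag0 : a / g ≠ 0 := by
    intro h; rw [h, mul_zero] at hag; exact ha0 hag.symm
  have hbg0 : b / g ≠ 0 := by
    intro h; rw [h, mul_zero] at hbg; exact hb0 hbg.symm
  have hpa : (a / g).primeFactors = a.primeFactors \ b.primeFactors := by
    have h1 : a.primeFactors = g.primeFactors ∪ (a / g).primeFactors := by
      conv_lhs => rw [← hag]
      exact Nat.primeFactors_mul hgpos.ne' hag0
    have hd : Disjoint g.primeFactors (a / g).primeFactors :=
      Nat.Coprime.disjoint_primeFactors hsa.1
    rw [← Finset.union_sdiff_cancel_left hd, ← h1, Nat.primeFactors_gcd ha0 hb0,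
      Finset.sdiff_inter_self_left]
  have hpb : (b / g).primeFactors = b.primeFactors \ a.primeFactors := by
    have h1 : b.primeFactors = g.primeFactors ∪ (b / g).primeFactors := by
      conv_lhs => rw [← hbg]
      exact Nat.primeFactors_mul hgpos.ne' hbg0
    have hd : Disjoint g.primeFactors (b / g).primeFactors :=
      Nat.Coprime.disjoint_primeFactors hsb.1
    rw [← Finset.union_sdiff_cancel_left hd, ← h1, Nat.primeFactors_gcd ha0 hb0,
      Finset.inter_comm, Finset.sdiff_inter_self_left]
  rw [hZ, Nat.primeFactors_mul hag0 hbg0, hpa, hpb, symmDiff_def, Finset.sup_eq_union]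

lemma ent_spec (m : ℕ) : ∀ n : ℕ, Squarefree (ent m n) ∧
    (ent m n).primeFactors = (Tset m n).image (Nat.nth Nat.Prime) := by
  induction m with
  | zero =>
    intro n
    have hp : (Nat.nth Nat.Prime n).Prime := Nat.prime_nth_prime n
    refine ⟨hp.squarefree, ?_⟩
    rw [show ent 0 n = Nat.nth Nat.Prime n from rfl, hp.primeFactors]
    have : Tset 0 n = {n} := by
      ext t
      rw [mem_Tset]
      constructor
      · rintro ⟨h1, h2⟩
        rcases Nat.eq_or_lt_of_le h1 with rfl | h
        · simp
        · rw [Nat.choose_eq_zero_of_lt (by omega)] at h2; simp at h2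
      · rintro ht
        simp only [Finset.mem_singleton] at ht
        subst ht
        simp
    rw [this, Finset.image_singleton]
  | succ m ih =>
    intro n
    obtain ⟨hsq1, hpf1⟩ := ih n
    obtain ⟨hsq2, hpf2⟩ := ih (n + 1)
    obtain ⟨hZsq, hZpf⟩ := Zfun_spec hsq1 hsq2
    refine ⟨hZsq, ?_⟩
    have hinj : Function.Injective (Nat.nth Nat.Prime) :=
      Nat.nth_injective Nat.infinite_setOf_prime
    rw [show ent (m + 1) n = Zfun (ent m n) (ent m (n + 1)) from rfl, hZpf, hpf1, hpf2,
      ← Finset.image_symmDiff _ _ hinj, ← Tset_succ]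

/-- The count of odd entries in row `m` of Pascal's triangle. -/
def W (m : ℕ) : ℕ := ∑ k ∈ Finset.range (m + 1), Nat.choose m k % 2

lemma card_primeFactors_eq_W (m : ℕ) : (dseq m).primeFactors.card = W m := by
  obtain ⟨-, hpf⟩ := ent_spec m 0
  rw [dseq, hpf,
    Finset.card_image_of_injective _ (Nat.nth_injective Nat.infinite_setOf_prime),
    Tset, Finset.card_image_of_injective _ (add_right_injective 0),
    Finset.card_filter, W]
  refine Finset.sum_congr rfl fun k _ => ?_
  have := Nat.mod_lt (Nat.choose m k) (show 0 < 2 by norm_num)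
  split_ifs with h <;> omega

lemma choose_pow_add_mod_two_low {s j k : ℕ} (hk : k < 2 ^ s) :
    Nat.choose (2 ^ s + j) k % 2 = Nat.choose j k % 2 := by
  rw [Nat.add_choose_eq]
  have hmem : ((0 : ℕ), k) ∈ Finset.HasAntidiagonal.antidiagonal k := by simp
  rw [← Finset.add_sum_erase _ _ hmem]
  have hdvd : 2 ∣ ∑ x ∈ (Finset.HasAntidiagonal.antidiagonal k).erase (0, k),
      Nat.choose (2 ^ s) x.1 * Nat.choose j x.2 := by
    refine Finset.dvd_sum fun x hx => ?_
    rw [Finset.mem_erase, Finset.HasAntidiagonal.mem_antidiagonal] at hx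
    have hx1 : x.1 ≠ 0 := by
      intro h
      apply hx.1
      have : x.2 = k := by omega
      exact Prod.ext h this
    have hx2 : x.1 ≠ 2 ^ s := by
      intro h; omega
    exact Dvd.dvd.mul_right (Nat.Prime.dvd_choose_pow Nat.prime_two hx1 hx2) _
  obtain ⟨e, he⟩ := hdvd
  rw [he]
  simp only [Nat.choose_zero_right, one_mul]
  omega

lemma choose_pow_add_mod_two_high {s j r : ℕ} (hj : j < 2 ^ s) :
    Nat.choose (2 ^ s + j) (2 ^ s + r) % 2 = Nat.choose j r % 2 := by
  rw [Nat.add_choose_eq]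
  have hmem : ((2 ^ s : ℕ), r) ∈ Finset.HasAntidiagonal.antidiagonal (2 ^ s + r) := by simp
  rw [← Finset.add_sum_erase _ _ hmem]
  have hdvd : 2 ∣ ∑ x ∈ (Finset.HasAntidiagonal.antidiagonal (2 ^ s + r)).erase (2 ^ s, r),
      Nat.choose (2 ^ s) x.1 * Nat.choose j x.2 := by
    refine Finset.dvd_sum fun x hx => ?_
    rw [Finset.mem_erase, Finset.HasAntidiagonal.mem_antidiagonal] at hx
    rcases eq_or_ne x.1 0 with h0 | h0
    · have h2 : x.2 = 2 ^ s + r := by omega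
      rw [h0, h2, Nat.choose_zero_right, one_mul, Nat.choose_eq_zero_of_lt (by omega)]
      exact dvd_zero 2
    · have h1 : x.1 ≠ 2 ^ s := by
        intro h
        apply hx.1
        have : x.2 = r := by omega
        exact Prod.ext h this
      exact Dvd.dvd.mul_right (Nat.Prime.dvd_choose_pow Nat.prime_two h0 h1) _
  obtain ⟨e, he⟩ := hdvd
  rw [he]
  simp only [Nat.choose_self, one_mul]
  omega

lemma W_pow_add {s j : ℕ} (hj : j < 2 ^ s) : W (2 ^ s + j) = 2 * W j := by
  have key : 2 ^ s + j + 1 = 2 ^ s + (j + 1) := by ring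
  rw [W, key, Finset.sum_range_add]
  have h1 : ∑ k ∈ Finset.range (2 ^ s), Nat.choose (2 ^ s + j) k % 2 = W j := by
    rw [show Finset.range (2 ^ s) = Finset.range ((j + 1) + (2 ^ s - (j + 1))) by
        congr 1; omega, Finset.sum_range_add]
    have hz : ∑ i ∈ Finset.range (2 ^ s - (j + 1)),
        Nat.choose (2 ^ s + j) (j + 1 + i) % 2 = 0 := by
      refine Finset.sum_eq_zero fun i hi => ?_
      rw [Finset.mem_range] at hi
      rw [choose_pow_add_mod_two_low (by omega), Nat.choose_eq_zero_of_lt (by omega)]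
      rfl
    rw [hz, add_zero, W]
    refine Finset.sum_congr rfl fun k hk => ?_
    rw [Finset.mem_range] at hk
    exact choose_pow_add_mod_two_low (by omega)
  have h2 : ∑ i ∈ Finset.range (j + 1), Nat.choose (2 ^ s + j) (2 ^ s + i) % 2 = W j :=
    Finset.sum_congr rfl fun k _ => choose_pow_add_mod_two_high hj
  rw [h1, h2]
  ring

theorem omega_d_doubling (s j : ℕ) (hs : 1 ≤ s) (hj : j ≤ 2 ^ s - 1) :
    (dseq (2 ^ s + j)).primeFactors.card = 2 * (dseq j).primeFactors.card := by
  have h2 : 1 ≤ 2 ^ s := Nat.one_le_two_pow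
  have hj' : j < 2 ^ s := by omega
  rw [card_primeFactors_eq_W, card_primeFactors_eq_W, W_pow_add hj']
end
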